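/- For every integer n ≥ 2, the number b(n) of permutations π of {1,…,n} having exactly one index i with 1 ≤ i ≤ n−1 such that π_{i+1} − π_i = 1 equals (n−1)·a(n−1), where a(m) = a_{1,1}(m) is the number of permutations σ of {1,…,m} such that σ_{i+1} − σ_i ≠ 1 for all 1 ≤ i ≤ m−1. -/

import Mathlib

/-- The number of rising successions of a permutation `π` of `{0,…,n-1}`
(equivalently `{1,…,n}`): indices `i` such that `π (i+1) - π i = 1`. -/
def risingCount (n : ℕ) (π : Equiv.Perm (Fin n)) : ℕ :=
  (Finset.univ.filter fun i : Fin n =>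
    ∃ j : Fin n, (j : ℕ) = (i : ℕ) + 1 ∧
      ((π j : ℕ) : ℤ) - ((π i : ℕ) : ℤ) = 1).card

/-- The set of permutations of `{1,…,n}` with no rising succession,
counted by `a(n) = a_{1,1}(n)`. -/
def noRise (n : ℕ) : Finset (Equiv.Perm (Fin n)) :=
  Finset.univ.filter fun π => risingCount n π = 0

/-- The set of permutations of `{1,…,n}` with exactly one rising succession,
counted by `b(n)`. -/
def oneRise (n : ℕ) : Finset (Equiv.Perm (Fin n)) :=
  Finset.univ.filter fun π => risingCount n π = 1

/- ### Auxiliary development -/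

/-- Succession predicate. -/
def SuccAt {n : ℕ} (π : Equiv.Perm (Fin n)) (i : Fin n) : Prop :=
  ∃ j : Fin n, (j : ℕ) = (i : ℕ) + 1 ∧ ((π j : ℕ) : ℤ) - ((π i : ℕ) : ℤ) = 1

instance {n : ℕ} (π : Equiv.Perm (Fin n)) : DecidablePred (SuccAt π) := fun i => by
  unfold SuccAt; infer_instance

lemma risingCount_eq {n : ℕ} (π : Equiv.Perm (Fin n)) :
    risingCount n π = (Finset.univ.filter (SuccAt π)).card := by
  unfold risingCount
  exact congrArg Finset.card (Finset.filter_congr fun i _ => Iff.rfl)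

lemma succAt_iff {n : ℕ} (π : Equiv.Perm (Fin n)) (i : Fin n) :
    SuccAt π i ↔ ∃ h : (i : ℕ) + 1 < n,
      ((π ⟨(i : ℕ) + 1, h⟩ : Fin n) : ℕ) = (π i : ℕ) + 1 := by
  constructor
  · rintro ⟨j, hj, hv⟩
    have hlt : (i : ℕ) + 1 < n := hj ▸ j.isLt
    have hje : (⟨(i : ℕ) + 1, hlt⟩ : Fin n) = j := Fin.ext hj.symm
    refine ⟨hlt, ?_⟩
    rw [hje]
    omega
  · rintro ⟨h, hv⟩
    exact ⟨⟨(i : ℕ) + 1, h⟩, rfl, by omega⟩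

lemma noRise_iff {n : ℕ} (σ : Equiv.Perm (Fin n)) :
    σ ∈ noRise n ↔ ∀ i, ¬ SuccAt σ i := by
  simp [noRise, risingCount_eq, Finset.card_eq_zero, Finset.filter_eq_empty_iff]

lemma oneRise_iff {n : ℕ} (π : Equiv.Perm (Fin n)) :
    π ∈ oneRise n ↔ ∃ a, SuccAt π a ∧ ∀ i, SuccAt π i → i = a := by
  simp only [oneRise, Finset.mem_filter, Finset.mem_univ, true_and, risingCount_eq,
    Finset.card_eq_one]
  constructor
  · rintro ⟨a, ha⟩
    have h1 : a ∈ Finset.univ.filter (SuccAt π) := ha ▸ Finset.mem_singleton_self a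
    refine ⟨a, (Finset.mem_filter.1 h1).2, fun i hi => ?_⟩
    have : i ∈ Finset.univ.filter (SuccAt π) := Finset.mem_filter.2 ⟨Finset.mem_univ _, hi⟩
    rw [ha, Finset.mem_singleton] at this
    exact this
  · rintro ⟨a, ha, hu⟩
    refine ⟨a, Finset.eq_singleton_iff_unique_mem.2 ⟨Finset.mem_filter.2 ⟨Finset.mem_univ _, ha⟩,
      fun i hi => hu i (Finset.mem_filter.1 hi).2⟩⟩

/-- Relabelling map on values: insert a hole above `K`. -/
def vmap (K v : ℕ) : ℕ := if v < K + 1 then v else v + 1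

lemma vmap_succ {K a b : ℕ} : vmap K b = vmap K a + 1 ↔ a ≠ K ∧ b = a + 1 := by
  unfold vmap; split_ifs <;> omega

lemma coe_succAbove {n : ℕ} (P : Fin (n + 1)) (j : Fin n) :
    ((P.succAbove j : Fin (n + 1)) : ℕ) = if (j : ℕ) < (P : ℕ) then (j : ℕ) else (j : ℕ) + 1 := by
  rw [Fin.succAbove]
  rcases lt_or_ge (Fin.castSucc j) P with h | h
  · rw [if_pos h, if_pos (by simpa [Fin.lt_def] using h)]
    simp
  · rw [if_neg (not_lt.mpr h), if_neg (by simp [Fin.le_def] at h; omega)]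
    simp

/-- Insertion map: insert the value `k+1` just after the value `k` in `σ`. -/
def Phi {m : ℕ} (k : Fin (m + 1)) (σ : Equiv.Perm (Fin (m + 1))) : Equiv.Perm (Fin (m + 2)) :=
  (finSuccEquiv' (σ⁻¹ k).succ).trans ((Equiv.optionCongr σ).trans (finSuccEquiv' k.succ).symm)

lemma Phi_apply_self {m : ℕ} (k : Fin (m + 1)) (σ : Equiv.Perm (Fin (m + 1))) :
    Phi k σ ((σ⁻¹ k).succ) = k.succ := by
  simp [Phi, Equiv.trans_apply, finSuccEquiv'_at, finSuccEquiv'_symm_none]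

lemma Phi_apply_succAbove {m : ℕ} (k : Fin (m + 1)) (σ : Equiv.Perm (Fin (m + 1)))
    (j : Fin (m + 1)) :
    Phi k σ ((σ⁻¹ k).succ.succAbove j) = k.succ.succAbove (σ j) := by
  simp [Phi, Equiv.trans_apply, finSuccEquiv'_succAbove, finSuccEquiv'_symm_some]

lemma coe_vs {m : ℕ} (k : Fin (m + 1)) (x : Fin (m + 1)) :
    ((k.succ.succAbove x : Fin (m + 2)) : ℕ) = vmap (k : ℕ) (x : ℕ) := by
  rw [coe_succAbove, vmap, Fin.val_succ]

lemma Phi_val_mid {m : ℕ} (k : Fin (m + 1)) (σ : Equiv.Perm (Fin (m + 1))) {i : Fin (m + 2)}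
    (h : (i : ℕ) = ((σ⁻¹ k : Fin (m + 1)) : ℕ) + 1) :
    ((Phi k σ i : Fin (m + 2)) : ℕ) = (k : ℕ) + 1 := by
  have hi : i = (σ⁻¹ k).succ := Fin.ext (by simpa using h)
  rw [hi, Phi_apply_self, Fin.val_succ]

lemma Phi_val_lo {m : ℕ} (k : Fin (m + 1)) (σ : Equiv.Perm (Fin (m + 1))) {i : Fin (m + 2)}
    {c : ℕ} (hc : c < m + 1) (hci : (i : ℕ) = c) (h : c < ((σ⁻¹ k : Fin (m + 1)) : ℕ) + 1) :
    ((Phi k σ i : Fin (m + 2)) : ℕ) = vmap (k : ℕ) ((σ ⟨c, hc⟩ : Fin (m + 1)) : ℕ) := by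
  have hi : i = (σ⁻¹ k).succ.succAbove ⟨c, hc⟩ := by
    apply Fin.ext
    rw [coe_succAbove, Fin.val_succ]
    have hcc : ((⟨c, hc⟩ : Fin (m + 1)) : ℕ) = c := rfl
    rw [hcc, if_pos h]
    exact hci
  rw [hi, Phi_apply_succAbove, coe_vs]

lemma Phi_val_hi {m : ℕ} (k : Fin (m + 1)) (σ : Equiv.Perm (Fin (m + 1))) {i : Fin (m + 2)}
    {c : ℕ} (hc : c < m + 1) (hci : (i : ℕ) = c + 1)
    (h : ((σ⁻¹ k : Fin (m + 1)) : ℕ) + 1 ≤ c) :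
    ((Phi k σ i : Fin (m + 2)) : ℕ) = vmap (k : ℕ) ((σ ⟨c, hc⟩ : Fin (m + 1)) : ℕ) := by
  have hi : i = (σ⁻¹ k).succ.succAbove ⟨c, hc⟩ := by
    apply Fin.ext
    rw [coe_succAbove, Fin.val_succ]
    have hcc : ((⟨c, hc⟩ : Fin (m + 1)) : ℕ) = c := rfl
    rw [hcc, if_neg (by omega)]
    exact hci
  rw [hi, Phi_apply_succAbove, coe_vs]

lemma sigma_apply_pos {m : ℕ} (k : Fin (m + 1)) (σ : Equiv.Perm (Fin (m + 1)))
    (h : ((σ⁻¹ k : Fin (m + 1)) : ℕ) < m + 1) :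
    σ ⟨((σ⁻¹ k : Fin (m + 1)) : ℕ), h⟩ = k := by
  have : (⟨((σ⁻¹ k : Fin (m + 1)) : ℕ), h⟩ : Fin (m + 1)) = σ⁻¹ k := Fin.ext rfl
  rw [this]
  simp

/-- natural-number form of the no-succession hypothesis -/
lemma noSucc_nat {m : ℕ} {σ : Equiv.Perm (Fin (m + 1))} (hσ : ∀ j, ¬ SuccAt σ j)
    (c : ℕ) (h1 : c < m + 1) (h2 : c + 1 < m + 1) :
    ((σ ⟨c + 1, h2⟩ : Fin (m + 1)) : ℕ) ≠ ((σ ⟨c, h1⟩ : Fin (m + 1)) : ℕ) + 1 := by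
  intro hv
  exact hσ ⟨c, h1⟩ ((succAt_iff σ ⟨c, h1⟩).2 ⟨h2, hv⟩)

lemma noSucc_nat' {m : ℕ} {σ : Equiv.Perm (Fin (m + 1))} (hσ : ∀ j, ¬ SuccAt σ j)
    (c d : ℕ) (h1 : c < m + 1) (h2 : d < m + 1) (hd : d = c + 1) :
    ((σ ⟨d, h2⟩ : Fin (m + 1)) : ℕ) ≠ ((σ ⟨c, h1⟩ : Fin (m + 1)) : ℕ) + 1 := by
  subst hd; exact noSucc_nat hσ c h1 h2

lemma sigma_ne_k {m : ℕ} (k : Fin (m + 1)) (σ : Equiv.Perm (Fin (m + 1)))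
    {c : ℕ} (h1 : c < m + 1) (hc : c ≠ ((σ⁻¹ k : Fin (m + 1)) : ℕ)) :
    ((σ ⟨c, h1⟩ : Fin (m + 1)) : ℕ) ≠ (k : ℕ) := by
  intro hv
  apply hc
  have h2 : σ ⟨c, h1⟩ = k := Fin.ext hv
  have h3 : (⟨c, h1⟩ : Fin (m + 1)) = σ⁻¹ k := by
    rw [← h2]; simp
  exact congrArg Fin.val h3

set_option maxHeartbeats 1000000 in
lemma succAt_Phi_iff {m : ℕ} (k : Fin (m + 1)) (σ : Equiv.Perm (Fin (m + 1)))
    (hσ : ∀ j, ¬ SuccAt σ j) (i : Fin (m + 2)) :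
    SuccAt (Phi k σ) i ↔ (i : ℕ) = ((σ⁻¹ k : Fin (m + 1)) : ℕ) := by
  have hpm : ((σ⁻¹ k : Fin (m + 1)) : ℕ) < m + 1 := (σ⁻¹ k).isLt
  set p : ℕ := ((σ⁻¹ k : Fin (m + 1)) : ℕ) with hp
  rw [succAt_iff]
  constructor
  · rintro ⟨h, hv⟩
    by_contra hip
    have hc1 : ((⟨(i : ℕ) + 1, h⟩ : Fin (m + 2)) : ℕ) = (i : ℕ) + 1 := rfl
    rcases lt_trichotomy ((i : ℕ)) p with hcp | hcp | hcp
    · -- below the hole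
      have e1 : ((Phi k σ i : Fin (m + 2)) : ℕ)
          = vmap (k : ℕ) ((σ ⟨(i : ℕ), by omega⟩ : Fin (m + 1)) : ℕ) :=
        Phi_val_lo k σ (by omega) rfl (by omega)
      have e2 : ((Phi k σ (⟨(i : ℕ) + 1, h⟩ : Fin (m + 2)) : Fin (m + 2)) : ℕ)
          = vmap (k : ℕ) ((σ ⟨(i : ℕ) + 1, by omega⟩ : Fin (m + 1)) : ℕ) :=
        Phi_val_lo k σ (by omega) rfl (by omega)
      rw [e1, e2, vmap_succ] at hv
      exact noSucc_nat hσ (i : ℕ) (by omega) (by omega) hv.2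
    · exact hip hcp
    · rcases eq_or_lt_of_le (show p + 1 ≤ (i : ℕ) from hcp) with hcp2 | hcp2
      · -- at the hole: would give a succession of σ at p
        have hpm2 : p + 1 < m + 1 := by omega
        have e1 : ((Phi k σ i : Fin (m + 2)) : ℕ) = (k : ℕ) + 1 :=
          Phi_val_mid k σ (by omega)
        have e2 : ((Phi k σ (⟨(i : ℕ) + 1, h⟩ : Fin (m + 2)) : Fin (m + 2)) : ℕ)
            = vmap (k : ℕ) ((σ ⟨p + 1, hpm2⟩ : Fin (m + 1)) : ℕ) :=
          Phi_val_hi k σ hpm2 (by show (i : ℕ) + 1 = p + 1 + 1; omega) (by omega)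
        rw [e1, e2] at hv
        have h6 : ((σ ⟨p + 1, hpm2⟩ : Fin (m + 1)) : ℕ) = (k : ℕ) + 1 := by
          unfold vmap at hv; split_ifs at hv <;> omega
        apply noSucc_nat hσ p hpm hpm2
        rw [h6, sigma_apply_pos k σ hpm]
      · -- above the hole
        have e1 : ((Phi k σ i : Fin (m + 2)) : ℕ)
            = vmap (k : ℕ) ((σ ⟨(i : ℕ) - 1, by omega⟩ : Fin (m + 1)) : ℕ) :=
          Phi_val_hi k σ (by omega) (by omega) (by omega)
        have e2 : ((Phi k σ (⟨(i : ℕ) + 1, h⟩ : Fin (m + 2)) : Fin (m + 2)) : ℕ)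
            = vmap (k : ℕ) ((σ ⟨(i : ℕ), by omega⟩ : Fin (m + 1)) : ℕ) :=
          Phi_val_hi k σ (by omega) rfl (by omega)
        rw [e1, e2, vmap_succ] at hv
        exact noSucc_nat' hσ ((i : ℕ) - 1) (i : ℕ) (by omega) (by omega) (by omega) hv.2
  · intro hcp
    have hip : i = ⟨p, by omega⟩ := Fin.ext hcp
    rw [hip]
    refine ⟨by show p + 1 < m + 2; omega, ?_⟩
    have e1 : ((Phi k σ ⟨p + 1, by omega⟩ : Fin (m + 2)) : ℕ) = (k : ℕ) + 1 :=
      Phi_val_mid k σ rfl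
    have e2 : ((Phi k σ ⟨p, by omega⟩ : Fin (m + 2)) : ℕ)
        = vmap (k : ℕ) ((σ ⟨p, hpm⟩ : Fin (m + 1)) : ℕ) :=
      Phi_val_lo k σ hpm rfl (by omega)
    refine e1.trans ?_
    rw [e2, sigma_apply_pos k σ hpm]
    unfold vmap
    rw [if_pos (by omega)]

lemma succAt_Phi_of {m : ℕ} (k : Fin (m + 1)) (σ : Equiv.Perm (Fin (m + 1)))
    (j : Fin (m + 1)) (hj : SuccAt σ j) :
    ∃ i : Fin (m + 2), SuccAt (Phi k σ) i ∧ (i : ℕ) ≠ ((σ⁻¹ k : Fin (m + 1)) : ℕ) := by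
  have hpm : ((σ⁻¹ k : Fin (m + 1)) : ℕ) < m + 1 := (σ⁻¹ k).isLt
  set p : ℕ := ((σ⁻¹ k : Fin (m + 1)) : ℕ) with hp
  obtain ⟨h2, hv2⟩ := (succAt_iff σ j).1 hj
  set J : ℕ := (j : ℕ) with hJ
  rcases lt_trichotomy J p with hc | hc | hc
  · refine ⟨⟨J, by omega⟩, ?_, by show J ≠ p; omega⟩
    rw [succAt_iff]
    refine ⟨by show J + 1 < m + 2; omega, ?_⟩
    have e1 : ((Phi k σ ⟨J, by omega⟩ : Fin (m + 2)) : ℕ)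
        = vmap (k : ℕ) ((σ ⟨J, by omega⟩ : Fin (m + 1)) : ℕ) :=
      Phi_val_lo k σ (by omega) rfl (by omega)
    have e2 : ((Phi k σ ⟨J + 1, by omega⟩ : Fin (m + 2)) : ℕ)
        = vmap (k : ℕ) ((σ ⟨J + 1, h2⟩ : Fin (m + 1)) : ℕ) :=
      Phi_val_lo k σ h2 rfl (by omega)
    refine e2.trans ?_
    rw [e1, vmap_succ]
    refine ⟨sigma_ne_k k σ (by omega) (by show J ≠ p; omega), ?_⟩
    exact hv2
  · refine ⟨⟨J + 1, by omega⟩, ?_, by show J + 1 ≠ p; omega⟩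
    rw [succAt_iff]
    refine ⟨by show J + 1 + 1 < m + 2; omega, ?_⟩
    have e1 : ((Phi k σ ⟨J + 1, by omega⟩ : Fin (m + 2)) : ℕ) = (k : ℕ) + 1 :=
      Phi_val_mid k σ (by show J + 1 = p + 1; omega)
    have e2 : ((Phi k σ ⟨J + 1 + 1, by omega⟩ : Fin (m + 2)) : ℕ)
        = vmap (k : ℕ) ((σ ⟨J + 1, h2⟩ : Fin (m + 1)) : ℕ) :=
      Phi_val_hi k σ h2 rfl (by omega)
    have h4 : ((σ j : Fin (m + 1)) : ℕ) = (k : ℕ) := by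
      have hje : j = σ⁻¹ k := Fin.ext (by omega)
      rw [hje]
      simp
    have h3 : ((σ ⟨J + 1, h2⟩ : Fin (m + 1)) : ℕ) = (k : ℕ) + 1 := hv2.trans (by rw [h4])
    refine e2.trans ?_
    rw [e1, h3]
    unfold vmap
    split_ifs <;> omega
  · refine ⟨⟨J + 1, by omega⟩, ?_, by show J + 1 ≠ p; omega⟩
    rw [succAt_iff]
    refine ⟨by show J + 1 + 1 < m + 2; omega, ?_⟩
    have e1 : ((Phi k σ ⟨J + 1, by omega⟩ : Fin (m + 2)) : ℕ)
        = vmap (k : ℕ) ((σ ⟨J, by omega⟩ : Fin (m + 1)) : ℕ) :=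
      Phi_val_hi k σ (by omega) rfl (by omega)
    have e2 : ((Phi k σ ⟨J + 1 + 1, by omega⟩ : Fin (m + 2)) : ℕ)
        = vmap (k : ℕ) ((σ ⟨J + 1, h2⟩ : Fin (m + 1)) : ℕ) :=
      Phi_val_hi k σ h2 rfl (by omega)
    refine e2.trans ?_
    rw [e1, vmap_succ]
    refine ⟨sigma_ne_k k σ (by omega) (by show J ≠ p; omega), ?_⟩
    exact hv2

lemma mem_oneRise_Phi {m : ℕ} (k : Fin (m + 1)) (σ : Equiv.Perm (Fin (m + 1)))
    (hσ : ∀ j, ¬ SuccAt σ j) : Phi k σ ∈ oneRise (m + 2) := by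
  have hpm : ((σ⁻¹ k : Fin (m + 1)) : ℕ) < m + 1 := (σ⁻¹ k).isLt
  rw [oneRise_iff]
  refine ⟨⟨((σ⁻¹ k : Fin (m + 1)) : ℕ), by omega⟩, ?_, ?_⟩
  · rw [succAt_Phi_iff k σ hσ]
  · intro i hi
    rw [succAt_Phi_iff k σ hσ] at hi
    exact Fin.ext hi

lemma Phi_inj {m : ℕ} {k k' : Fin (m + 1)} {σ σ' : Equiv.Perm (Fin (m + 1))}
    (hσ : ∀ j, ¬ SuccAt σ j) (hσ' : ∀ j, ¬ SuccAt σ' j) (h : Phi k σ = Phi k' σ') :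
    k = k' ∧ σ = σ' := by
  have hpm : ((σ⁻¹ k : Fin (m + 1)) : ℕ) < m + 1 := (σ⁻¹ k).isLt
  have hpval : ((σ⁻¹ k : Fin (m + 1)) : ℕ) = ((σ'⁻¹ k' : Fin (m + 1)) : ℕ) := by
    have h1 : SuccAt (Phi k σ) ⟨((σ⁻¹ k : Fin (m + 1)) : ℕ), by omega⟩ :=
      (succAt_Phi_iff k σ hσ _).2 rfl
    rw [h] at h1
    exact (succAt_Phi_iff k' σ' hσ' _).1 h1
  have hP : σ⁻¹ k = σ'⁻¹ k' := Fin.ext hpval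
  have hk : k = k' := by
    have h2 := Phi_apply_self k σ
    rw [h, hP, Phi_apply_self k' σ'] at h2
    exact (Fin.succ_injective _ h2).symm
  subst hk
  refine ⟨rfl, ?_⟩
  apply Equiv.ext
  intro j
  have h3 := Phi_apply_succAbove k σ j
  rw [h, hP, Phi_apply_succAbove k σ'] at h3
  exact (Fin.succAbove_right_injective h3).symm

lemma Phi_surj {m : ℕ} (π : Equiv.Perm (Fin (m + 2))) (hπ : π ∈ oneRise (m + 2)) :
    ∃ k σ, σ ∈ noRise (m + 1) ∧ Phi k σ = π := by
  obtain ⟨a, ha, hu⟩ := (oneRise_iff π).1 hπ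
  obtain ⟨h1, hval⟩ := (succAt_iff π a).1 ha
  have hKb : (π a : ℕ) < m + 1 := by
    have := (π ⟨(a : ℕ) + 1, h1⟩).isLt
    omega
  set k : Fin (m + 1) := ⟨(π a : ℕ), hKb⟩ with hk
  have hab : (a : ℕ) < m + 1 := by omega
  set p0 : Fin (m + 1) := ⟨(a : ℕ), hab⟩ with hp0
  set P : Fin (m + 2) := p0.succ with hP
  set V : Fin (m + 2) := k.succ with hV
  have hπP : π P = V := by
    have hPi : P = (⟨(a : ℕ) + 1, h1⟩ : Fin (m + 2)) := Fin.ext rfl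
    rw [hPi]
    exact Fin.ext hval
  set e := ((finSuccEquiv' P).symm.trans (π.trans (finSuccEquiv' V))) with he
  have henone : e none = none := by
    simp [he, Equiv.trans_apply, finSuccEquiv'_symm_none, hπP, finSuccEquiv'_at]
  set σ : Equiv.Perm (Fin (m + 1)) := Equiv.removeNone e with hσdef
  have hsome : ∀ j, π (P.succAbove j) = V.succAbove (σ j) := by
    intro j
    have hex : ∃ x, e (some j) = some x := by
      rcases h3 : e (some j) with _ | x
      · exfalso
        have h4 := e.injective (henone.trans h3.symm)
        simp at h4
      · exact ⟨x, rfl⟩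
    have h4 := Equiv.removeNone_some e hex
    have h5 : e (some j) = finSuccEquiv' V (π (P.succAbove j)) := by
      simp [he, Equiv.trans_apply, finSuccEquiv'_symm_some]
    rw [h5] at h4
    have h6 := congrArg (finSuccEquiv' V).symm h4
    simpa [finSuccEquiv'_symm_some] using h6.symm
  have hσp0 : σ p0 = k := by
    have h6 := hsome p0
    have h7 : P.succAbove p0 = Fin.castSucc p0 :=
      Fin.succAbove_of_castSucc_lt _ _ (@Fin.castSucc_lt_succ _ p0)
    rw [h7] at h6
    have h8 : Fin.castSucc p0 = a := Fin.ext rfl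
    rw [h8] at h6
    apply Fin.succAbove_right_injective (p := V)
    rw [← h6]
    rw [Fin.succAbove_of_castSucc_lt _ _ (@Fin.castSucc_lt_succ _ k)]
    exact Fin.ext rfl
  have hinv : σ⁻¹ k = p0 := by
    rw [← hσp0]
    simp
  have hPhi : Phi k σ = π := by
    apply Equiv.ext
    intro x
    rcases eq_or_ne x P with rfl | hx
    · rw [hπP]
      have h9 : (σ⁻¹ k).succ = P := by rw [hinv]
      rw [← h9]
      exact Phi_apply_self k σ
    · obtain ⟨j, hj⟩ := Fin.exists_succAbove_eq hx
      rw [← hj, hsome j]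
      have h9 : (σ⁻¹ k).succ = P := by rw [hinv]
      rw [← h9]
      exact Phi_apply_succAbove k σ j
  have hno : σ ∈ noRise (m + 1) := by
    rw [noRise_iff]
    intro j hj
    obtain ⟨i, hi, hne⟩ := succAt_Phi_of k σ j hj
    rw [hPhi] at hi
    have hia := hu i hi
    apply hne
    rw [hia, hinv]
  exact ⟨k, σ, hno, hPhi⟩

/-- For `n ≥ 2`, `b(n) = (n-1)·a(n-1)`. -/
theorem oneRise_card (n : ℕ) (hn : 2 ≤ n) :
    (oneRise n).card = (n - 1) * (noRise (n - 1)).card := by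
  obtain ⟨m, rfl⟩ : ∃ m, n = m + 2 := ⟨n - 2, by omega⟩
  have h1 : m + 2 - 1 = m + 1 := rfl
  rw [h1]
  have hcard : ((Finset.univ : Finset (Fin (m + 1))) ×ˢ noRise (m + 1)).card
      = (oneRise (m + 2)).card := by
    apply Finset.card_bij (fun x _ => Phi x.1 x.2)
    · rintro ⟨k, σ⟩ hx
      rw [Finset.mem_product] at hx
      exact mem_oneRise_Phi k σ ((noRise_iff σ).1 hx.2)
    · rintro ⟨k, σ⟩ hx ⟨k', σ'⟩ hx' hEq
      rw [Finset.mem_product] at hx hx'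
      obtain ⟨hk, hs⟩ := Phi_inj ((noRise_iff σ).1 hx.2) ((noRise_iff σ').1 hx'.2) hEq
      exact Prod.ext hk hs
    · intro π hπ
      obtain ⟨k, σ, hσ, hP⟩ := Phi_surj π hπ
      exact ⟨(k, σ), Finset.mem_product.2 ⟨Finset.mem_univ _, hσ⟩, hP⟩
  rw [← hcard, Finset.card_product, Finset.card_univ, Fintype.card_fin]
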